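/- arXiv:0905.1053 — 2 statements merged into one kernel-verified Lean document; each statement's English description precedes it below -/
import Mathlib

section
/- Let G = (V, E) be a quasi 3-regular, exactly 3-edge-connected, 2-vertex-connected multigraph, and let C be a chordless cycle in G containing the vertex of degree greater than 3 (if one exists). Let G' be obtained from G by contracting C into a single vertex u (delete the vertices of C, add u, and replace each edge from a vertex of C to a vertex outside C by an edge from u to that vertex). Then G' is exactly 3-edge-connected and quasi 3-regular. -/
/-! Basic theory of loopless undirected multigraphs. -/

/-- A loopless undirected multigraph on the vertex type `V`: a type of edges
together with a map assigning to each edge its unordered pair of (distinct)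
endpoints.  All multigraphs are assumed to have finitely many edges. -/
structure Multigraph (V : Type) where
  Edge : Type
  ends : Edge → Sym2 V
  loopless : ∀ e, ¬ (ends e).IsDiag
  edge_finite : Finite Edge

namespace Multigraph

open scoped Classical

variable {V : Type}

instance (G : Multigraph V) : Finite G.Edge := G.edge_finite

lemma exists_pair_eq {α : Type} (z : Sym2 α) : ∃ x y, z = s(x, y) := by
  induction z using Sym2.ind with
  | _ x y => exact ⟨x, y, rfl⟩

lemma map_not_isDiag {α β : Type} (f : α → β) (z : Sym2 α)
    (hf : ∀ x ∈ z, ∀ y ∈ z, f x = f y → x = y) (hz : ¬ z.IsDiag) :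
    ¬ (z.map f).IsDiag := by
  obtain ⟨x, y, rfl⟩ := exists_pair_eq z
  rw [Sym2.map_pair_eq, Sym2.mk_isDiag_iff]
  rw [Sym2.mk_isDiag_iff] at hz
  exact fun h => hz (hf x (by simp) y (by simp) h)

/-- Restrict an unordered pair, all of whose members satisfy `P`, to an
unordered pair of elements of the subtype `{x // P x}`. -/
noncomputable def sym2RestrictP {α : Type} (P : α → Prop) (z : Sym2 α) (h : ∀ x ∈ z, P x) :
    Sym2 {x : α // P x} :=
  z.map fun x =>
    if hx : P x then ⟨x, hx⟩
    else Classical.choice (by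
      obtain ⟨a, b, rfl⟩ := exists_pair_eq z
      exact ⟨⟨a, h a (by simp)⟩⟩)

lemma sym2RestrictP_not_isDiag {α : Type} (P : α → Prop) (z : Sym2 α) (h : ∀ x ∈ z, P x)
    (hz : ¬ z.IsDiag) : ¬ (sym2RestrictP P z h).IsDiag := by
  apply map_not_isDiag
  · intro a ha b hb hab
    rw [dif_pos (h a ha), dif_pos (h b hb)] at hab
    exact congrArg Subtype.val hab
  · exact hz

/-- Walks in a multigraph, recorded as alternating sequences of vertices and edges. -/
inductive Walk (G : Multigraph V) : V → V → Type
  | nil (v : V) : Walk G v v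
  | cons {u v w : V} (e : G.Edge) (he : G.ends e = s(u, v)) (p : Walk G v w) : Walk G u w

namespace Walk

variable {G : Multigraph V}

/-- The list of edges used by a walk. -/
def edges : ∀ {u v : V}, G.Walk u v → List G.Edge
  | _, _, nil _ => []
  | _, _, cons e _ p => e :: p.edges

/-- The list of vertices visited by a walk, in order. -/
def support : ∀ {u v : V}, G.Walk u v → List V
  | u, _, nil _ => [u]
  | u, _, cons _ _ p => u :: p.support

end Walk

/-- `G.HasEDP u v k` : there are (at least) `k` pairwise edge-disjoint paths
between `u` and `v` in `G` (formalized as `k` pairwise edge-disjoint trails,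
which is equivalent). -/
def HasEDP (G : Multigraph V) (u v : V) (k : ℕ) : Prop :=
  ∃ P : Fin k → G.Walk u v,
    (∀ i, (P i).edges.Nodup) ∧
    ∀ i j, i ≠ j → ∀ e, e ∈ (P i).edges → e ∉ (P j).edges

/-- `G` is `k`-edge-connected: between any two distinct vertices there are at
least `k` pairwise edge-disjoint paths. -/
def EdgeConnected (G : Multigraph V) (k : ℕ) : Prop :=
  Nontrivial V ∧ ∀ u v : V, u ≠ v → G.HasEDP u v k

/-- `G` is exactly `k`-edge-connected: between any two distinct vertices there
are exactly `k` pairwise edge-disjoint paths (at least `k`, and not `k + 1`). -/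
def ExactlyEdgeConnected (G : Multigraph V) (k : ℕ) : Prop :=
  Nontrivial V ∧ ∀ u v : V, u ≠ v → G.HasEDP u v k ∧ ¬ G.HasEDP u v (k + 1)

/-- The degree of a vertex: the number of edges incident to it. -/
noncomputable def degree (G : Multigraph V) (v : V) : ℕ :=
  {e : G.Edge | v ∈ G.ends e}.ncard

/-- Two vertices are adjacent if some edge joins them. -/
def Adj (G : Multigraph V) (u v : V) : Prop := ∃ e : G.Edge, G.ends e = s(u, v)

/-- `G` restricted to `S` is connected (witnessed by walks staying inside `S`). -/
def ConnectedOn (G : Multigraph V) (S : Set V) : Prop :=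
  ∀ u ∈ S, ∀ v ∈ S, ∃ p : G.Walk u v, ∀ x ∈ p.support, x ∈ S

/-- A multigraph is connected if it is nonempty and any two vertices are
joined by a walk. -/
def Connected (G : Multigraph V) : Prop :=
  Nonempty V ∧ ∀ u v : V, Nonempty (G.Walk u v)

/-- A multigraph is 2-vertex-connected (biconnected) if it is connected and
removing any single vertex leaves it connected. -/
def Biconnected (G : Multigraph V) : Prop :=
  G.Connected ∧ ∀ x : V, G.ConnectedOn {x}ᶜ

/-- A closed walk is a cycle if it repeats no edge, repeats no vertex except
the base point, and has length at least 2 (a double edge is a cycle of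
length 2; loops are excluded since multigraphs are loopless). -/
def IsCycle {G : Multigraph V} {v : V} (p : G.Walk v v) : Prop :=
  p.edges.Nodup ∧ p.support.tail.Nodup ∧ 2 ≤ p.edges.length

/-- A closed walk is chordless if no edge outside of it joins two of its
vertices (a parallel copy of one of its edges counts as a chord). -/
def IsChordless {G : Multigraph V} {v : V} (p : G.Walk v v) : Prop :=
  ∀ e : G.Edge, e ∉ p.edges → ∀ x y : V, G.ends e = s(x, y) →
    x ∈ p.support → y ∈ p.support → False

/-- `G.ReachAvoid S x y`: there is a walk from `x` to `y` avoiding the set `S`. -/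
def ReachAvoid (G : Multigraph V) (S : Set V) (x y : V) : Prop :=
  ∃ p : G.Walk x y, ∀ z ∈ p.support, z ∉ S

/-- The vertex sets of the connected components of `G ∖ S`.  For a cycle (or
any subgraph) `C`, the `C`-partition of the paper consists of `C` together
with these components; its size is the number of components. -/
def componentsAvoiding (G : Multigraph V) (S : Set V) : Set (Set V) :=
  {T | ∃ x, x ∉ S ∧ T = {y | G.ReachAvoid S x y}}

/-- Contract the (nonempty) vertex set `S` of `G` to a single new vertex
(`none`), deleting the edges inside `S`. -/
noncomputable def contractSet (G : Multigraph V) (S : Set V) :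
    Multigraph (Option {x : V // x ∉ S}) where
  Edge := {e : G.Edge // ¬ ∀ x ∈ G.ends e, x ∈ S}
  ends e := (G.ends e.1).map fun x => if h : x ∈ S then none else some ⟨x, h⟩
  loopless := by
    rintro ⟨e, he⟩ hd
    obtain ⟨x, y, hxy⟩ := exists_pair_eq (G.ends e)
    have hxyne : x ≠ y := by
      have h0 := G.loopless e
      rw [hxy, Sym2.mk_isDiag_iff] at h0
      exact h0
    have hor : x ∉ S ∨ y ∉ S := by
      by_contra hcon
      push_neg at hcon
      refine he fun z hz => ?_
      rw [hxy, Sym2.mem_iff] at hz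
      rcases hz with rfl | rfl
      exacts [hcon.1, hcon.2]
    simp only [hxy, Sym2.map_pair_eq, Sym2.mk_isDiag_iff] at hd
    rcases hor with hx | hy
    · rw [dif_neg hx] at hd
      by_cases hy : y ∈ S
      · rw [dif_pos hy] at hd; exact nomatch hd
      · rw [dif_neg hy] at hd
        exact hxyne (congrArg Subtype.val (Option.some_injective _ hd))
    · rw [dif_neg hy] at hd
      by_cases hx : x ∈ S
      · rw [dif_pos hx] at hd; exact nomatch hd
      · rw [dif_neg hx] at hd
        exact hxyne (congrArg Subtype.val (Option.some_injective _ hd))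
  edge_finite := by
    have := G.edge_finite
    exact inferInstance

/-- The subgraph of `G` induced by the vertex set `S`. -/
noncomputable def induce (G : Multigraph V) (S : Set V) : Multigraph ↥S where
  Edge := {e : G.Edge // ∀ x ∈ G.ends e, x ∈ S}
  ends e := sym2RestrictP (· ∈ S) (G.ends e.1) e.2
  loopless := fun e => sym2RestrictP_not_isDiag _ _ _ (G.loopless e.1)
  edge_finite := by
    have := G.edge_finite
    exact inferInstance

/-- Isomorphism of multigraphs. -/
structure Iso {V W : Type} (G : Multigraph V) (H : Multigraph W) where
  vmap : V ≃ W
  emap : G.Edge ≃ H.Edge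
  ends_vmap : ∀ e : G.Edge, H.ends (emap e) = (G.ends e).map vmap

/-- `G` is quasi `k`-regular: at most one vertex has degree different from `k`. -/
def QuasiRegular (G : Multigraph V) (k : ℕ) : Prop :=
  {v : V | G.degree v ≠ k}.Subsingleton

end Multigraph
namespace Multigraph

open scoped Classical

variable {V : Type}

/-- Block gluing: identify the vertex `u₁` of `G₁` with the vertex `u₂` of `G₂`
(the identified vertex is represented by `Sum.inl u₁`), keeping all edges. -/
noncomputable def blockGlue {V₁ V₂ : Type} (G₁ : Multigraph V₁) (G₂ : Multigraph V₂)
    (u₁ : V₁) (u₂ : V₂) : Multigraph (V₁ ⊕ {y : V₂ // y ≠ u₂}) where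
  Edge := G₁.Edge ⊕ G₂.Edge
  ends e :=
    match e with
    | .inl e => (G₁.ends e).map Sum.inl
    | .inr e => (G₂.ends e).map fun y => if h : y = u₂ then Sum.inl u₁ else Sum.inr ⟨y, h⟩
  loopless := by
    rintro (e | e) hd
    · exact map_not_isDiag _ _ (fun x _ y _ h => Sum.inl_injective h) (G₁.loopless e) hd
    · refine map_not_isDiag _ _ (fun x _ y _ h => ?_) (G₂.loopless e) hd
      by_cases hx : x = u₂ <;> by_cases hy : y = u₂
      · rw [hx, hy]
      · simp [hx, hy] at h
      · simp [hx, hy] at h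
      · simp [hx, hy] at h
        exact h
  edge_finite := by
    have := G₁.edge_finite; have := G₂.edge_finite
    exact inferInstance

/-- `k`-bridge addition: add a new vertex (`none`) joined to the existing
vertex `v` by `k` parallel edges. -/
def bridgeAdd (G : Multigraph V) (v : V) (k : ℕ) : Multigraph (Option V) where
  Edge := G.Edge ⊕ Fin k
  ends e :=
    match e with
    | .inl e => (G.ends e).map some
    | .inr _ => s(none, some v)
  loopless := by
    rintro (e | i) hd
    · exact map_not_isDiag _ _ (fun x _ y _ h => Option.some_injective _ h) (G.loopless e) hd
    · rw [Sym2.mk_isDiag_iff] at hd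
      exact nomatch hd
  edge_finite := by
    have := G.edge_finite
    exact inferInstance

end Multigraph
namespace Multigraph

open scoped Classical

variable {V : Type}

lemma other_ne {G : Multigraph V} {u : V} {e : G.Edge} (h : u ∈ G.ends e) :
    Sym2.Mem.other h ≠ u := by
  intro heq
  have hs := Sym2.other_spec h
  rw [heq] at hs
  have hl := G.loopless e
  rw [← hs, Sym2.mk_isDiag_iff] at hl
  exact hl rfl

/-- Vertex gluing: given vertices `u₁` of `G₁` and `u₂` of `G₂`, both of degree
`k` (witnessed by enumerations `ι₁`, `ι₂` of their incident edges), delete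
`u₁` and `u₂` and join, for each `i`, the other endpoint of the `i`-th edge at
`u₁` to the other endpoint of the `i`-th edge at `u₂`. -/
noncomputable def vertexGlue {V₁ V₂ : Type} (G₁ : Multigraph V₁) (G₂ : Multigraph V₂)
    (u₁ : V₁) (u₂ : V₂) {k : ℕ}
    (ι₁ : Fin k ≃ {e : G₁.Edge // u₁ ∈ G₁.ends e})
    (ι₂ : Fin k ≃ {e : G₂.Edge // u₂ ∈ G₂.ends e}) :
    Multigraph ({x : V₁ // x ≠ u₁} ⊕ {y : V₂ // y ≠ u₂}) where
  Edge := {e : G₁.Edge // u₁ ∉ G₁.ends e} ⊕ {e : G₂.Edge // u₂ ∉ G₂.ends e} ⊕ Fin k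
  ends e :=
    match e with
    | .inl e =>
        (sym2RestrictP (· ≠ u₁) (G₁.ends e.1) fun x hx hxe => e.2 (hxe ▸ hx)).map Sum.inl
    | .inr (.inl e) =>
        (sym2RestrictP (· ≠ u₂) (G₂.ends e.1) fun y hy hye => e.2 (hye ▸ hy)).map Sum.inr
    | .inr (.inr i) =>
        s(Sum.inl ⟨Sym2.Mem.other (ι₁ i).2, other_ne (ι₁ i).2⟩,
          Sum.inr ⟨Sym2.Mem.other (ι₂ i).2, other_ne (ι₂ i).2⟩)
  loopless := by
    rintro (e | e | i) hd
    · exact map_not_isDiag _ _ (fun x _ y _ h => Sum.inl_injective h)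
        (sym2RestrictP_not_isDiag _ _ _ (G₁.loopless e.1)) hd
    · exact map_not_isDiag _ _ (fun x _ y _ h => Sum.inr_injective h)
        (sym2RestrictP_not_isDiag _ _ _ (G₂.loopless e.1)) hd
    · rw [Sym2.mk_isDiag_iff] at hd
      exact nomatch hd
  edge_finite := by
    have := G₁.edge_finite; have := G₂.edge_finite
    exact inferInstance

/-- Cycle expansion: replace the vertex `u`, of degree `d` with incident edges
enumerated by `ι`, by a cycle on `d'` new vertices `u_0, …, u_{d'-1}`
(`2 ≤ d' ≤ d`); the `i`-th former edge at `u` is attached to `u_i` for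
`i < d' - 1` and to `u_{d'-1}` for `i ≥ d' - 1`, so each of `u_0, …, u_{d'-2}`
receives exactly one of them and `u_{d'-1}` receives the rest. -/
noncomputable def cycleExpand (G : Multigraph V) (u : V) {d d' : ℕ}
    (h2 : 2 ≤ d') (hdd : d' ≤ d)
    (ι : Fin d ≃ {e : G.Edge // u ∈ G.ends e}) :
    Multigraph ({x : V // x ≠ u} ⊕ Fin d') where
  Edge := {e : G.Edge // u ∉ G.ends e} ⊕ (Fin d ⊕ Fin d')
  ends e :=
    match e with
    | .inl e =>
        (sym2RestrictP (· ≠ u) (G.ends e.1) fun x hx hxe => e.2 (hxe ▸ hx)).map Sum.inl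
    | .inr (.inl i) =>
        s(Sum.inr ⟨min i.1 (d' - 1), by omega⟩,
          Sum.inl ⟨Sym2.Mem.other (ι i).2, other_ne (ι i).2⟩)
    | .inr (.inr j) =>
        s(Sum.inr j, Sum.inr ⟨(j.1 + 1) % d', Nat.mod_lt _ (by omega)⟩)
  loopless := by
    rintro (e | i | j) hd
    · exact map_not_isDiag _ _ (fun x _ y _ h => Sum.inl_injective h)
        (sym2RestrictP_not_isDiag _ _ _ (G.loopless e.1)) hd
    · rw [Sym2.mk_isDiag_iff] at hd
      exact nomatch hd
    · rw [Sym2.mk_isDiag_iff] at hd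
      have hj : j.1 < d' := j.2
      have := congrArg Fin.val (Sum.inr_injective hd)
      simp only at this
      rcases Nat.lt_or_ge (j.1 + 1) d' with h | h
      · rw [Nat.mod_eq_of_lt h] at this; omega
      · have hj1 : j.1 + 1 = d' := by omega
        rw [hj1, Nat.mod_self] at this; omega
  edge_finite := by
    have := G.edge_finite
    exact inferInstance

end Multigraph
namespace Multigraph

open scoped Classical

variable {V : Type}

/-- The edges of `G` crossing the vertex bipartition `⟨A, Aᶜ⟩`. -/
def cutEdges (G : Multigraph V) (A : Set V) : Set G.Edge :=
  {e | (∃ x ∈ G.ends e, x ∈ A) ∧ ∃ y ∈ G.ends e, y ∉ A}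

/-- The bipartition `⟨A, Aᶜ⟩` is a minimum edge cut of `G`: both sides are
nonempty and no other bipartition has fewer crossing edges. -/
def IsMinCut (G : Multigraph V) (A : Set V) : Prop :=
  A.Nonempty ∧ Aᶜ.Nonempty ∧
    ∀ B : Set V, B.Nonempty → Bᶜ.Nonempty →
      (G.cutEdges A).ncard ≤ (G.cutEdges B).ncard

/-- One side of a vertex splitting: keep the side `A` of the cut `⟨A, Aᶜ⟩`,
delete the other side, and reattach each cut edge to a single new vertex
(`none`). -/
noncomputable def splitSide (G : Multigraph V) (A : Set V) :
    Multigraph (Option {x : V // x ∈ A}) where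
  Edge := {e : G.Edge // ∀ x ∈ G.ends e, x ∈ A} ⊕ {e : G.Edge // e ∈ G.cutEdges A}
  ends e :=
    match e with
    | .inl e => (sym2RestrictP (· ∈ A) (G.ends e.1) e.2).map some
    | .inr e =>
        s(none, some ⟨Classical.choose e.2.1, (Classical.choose_spec e.2.1).2⟩)
  loopless := by
    rintro (e | e) hd
    · exact map_not_isDiag _ _ (fun x _ y _ h => Option.some_injective _ h)
        (sym2RestrictP_not_isDiag _ _ _ (G.loopless e.1)) hd
    · rw [Sym2.mk_isDiag_iff] at hd
      exact nomatch hd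
  edge_finite := by
    have := G.edge_finite
    exact inferInstance

/-- The dumbbell graph: two vertices joined by three parallel edges. -/
def dumbbell : Multigraph (Fin 2) where
  Edge := Fin 3
  ends _ := s(0, 1)
  loopless := fun _ h => absurd (Sym2.mk_isDiag_iff.mp h) (by decide)
  edge_finite := inferInstance

/-- `B` is (the vertex set of) a block of `G`: a maximal set of vertices
inducing a connected, 2-vertex-connected subgraph. -/
def IsBlock (G : Multigraph V) (B : Set V) : Prop :=
  (G.induce B).Biconnected ∧
    ∀ B' : Set V, B ⊆ B' → (G.induce B').Biconnected → B' = B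

/-- The set of double edges of `G`, as unordered pairs of distinct parallel
edges. -/
def doubleEdges (G : Multigraph V) : Set (Sym2 G.Edge) :=
  {z | ∃ e f : G.Edge, z = s(e, f) ∧ e ≠ f ∧ G.ends e = G.ends f}

/-- A collapsible cycle: a chordless, non-articulation cycle, all but at most
one of whose vertices have degree 3, whose contraction to a single vertex
yields an exactly 3-edge-connected multigraph. -/
def IsCollapsible {G : Multigraph V} {v : V} (p : G.Walk v v) : Prop :=
  IsCycle p ∧ IsChordless p ∧
    (G.componentsAvoiding {x | x ∈ p.support}).Subsingleton ∧
    {x : V | x ∈ p.support ∧ G.degree x ≠ 3}.Subsingleton ∧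
    (G.contractSet {x | x ∈ p.support}).ExactlyEdgeConnected 3

end Multigraph
namespace Multigraph

open scoped Classical

variable {V : Type}

/-- Smooth out the degree-two vertex `x` (whose two incident edges are
`e₁ = (x, a)` and `e₂ = (x, b)`): delete `x`, `e₁` and `e₂` and add a single
new edge joining `a` and `b`. -/
noncomputable def smoothAt {S : Set V} (H : Multigraph ↥S) (x a b : ↥S)
    (e₁ e₂ : H.Edge) (hne : e₁ ≠ e₂)
    (h₁ : H.ends e₁ = s(x, a)) (h₂ : H.ends e₂ = s(x, b))
    (hax : a ≠ x) (hbx : b ≠ x) (hab : a ≠ b)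
    (hdeg : ∀ e : H.Edge, x ∈ H.ends e → e = e₁ ∨ e = e₂) :
    Multigraph ↥(S \ {(x : V)}) where
  Edge := {e : H.Edge // e ≠ e₁ ∧ e ≠ e₂} ⊕ Unit
  ends e :=
    match e with
    | .inl e =>
        (sym2RestrictP (fun y : ↥S => y ≠ x) (H.ends e.1)
            (fun y hy hyx => by
              subst hyx
              rcases hdeg e.1 hy with h | h
              exacts [e.2.1 h, e.2.2 h])).map
          fun y => ⟨y.1.1, y.1.2, fun hh => y.2 (Subtype.ext hh)⟩
    | .inr _ =>
        s(⟨a.1, a.2, fun hh => hax (Subtype.ext hh)⟩,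
          ⟨b.1, b.2, fun hh => hbx (Subtype.ext hh)⟩)
  loopless := by
    rintro (e | e) hd
    · refine map_not_isDiag _ _ (fun y _ z _ h => ?_)
        (sym2RestrictP_not_isDiag _ _ _ (H.loopless e.1)) hd
      have hv := Subtype.ext_iff.mp h
      exact Subtype.ext (Subtype.ext hv)
    · rw [Sym2.mk_isDiag_iff] at hd
      have hv := Subtype.ext_iff.mp hd
      exact hab (Subtype.ext hv)
  edge_finite := by
    have := H.edge_finite
    exact inferInstance

/-- `SmoothSeq H K` : the multigraph `K` is obtained from `H` by a finite
sequence of smoothings of degree-two vertices. -/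
inductive SmoothSeq {V : Type} : ∀ {S T : Set V}, Multigraph ↥S → Multigraph ↥T → Prop
  | refl {S : Set V} (H : Multigraph ↥S) : SmoothSeq H H
  | step {S T : Set V} {H : Multigraph ↥S} {K : Multigraph ↥T}
      (x a b : ↥S) (e₁ e₂ : H.Edge) (hne : e₁ ≠ e₂)
      (h₁ : H.ends e₁ = s(x, a)) (h₂ : H.ends e₂ = s(x, b))
      (hax : a ≠ x) (hbx : b ≠ x) (hab : a ≠ b)
      (hdeg : ∀ e : H.Edge, x ∈ H.ends e → e = e₁ ∨ e = e₂) :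
      SmoothSeq (smoothAt H x a b e₁ e₂ hne h₁ h₂ hax hbx hab hdeg) K → SmoothSeq H K

/-- `G` is a 3-thick tree: it is obtained from a tree by replacing every tree
edge by three parallel edges. -/
def IsThreeThickTree (G : Multigraph V) : Prop :=
  ∃ T : SimpleGraph V, T.IsTree ∧
    ∃ f : G.Edge ≃ T.edgeSet × Fin 3, ∀ e : G.Edge, G.ends e = ((f e).1 : Sym2 V)

/-- The graphs obtainable from dumbbell graphs by cycle expansions and block
gluings (up to isomorphism). -/
inductive Synth3 : ∀ {V : Type}, Multigraph V → Prop
  | dumbbell : Synth3 dumbbell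
  | glue {V₁ V₂ : Type} {G₁ : Multigraph V₁} {G₂ : Multigraph V₂} (u₁ : V₁) (u₂ : V₂) :
      Synth3 G₁ → Synth3 G₂ → Synth3 (blockGlue G₁ G₂ u₁ u₂)
  | expand {V : Type} {G : Multigraph V} (u : V) {d d' : ℕ} (h2 : 2 ≤ d') (hdd : d' ≤ d)
      (ι : Fin d ≃ {e : G.Edge // u ∈ G.ends e}) :
      Synth3 G → Synth3 (G.cycleExpand u h2 hdd ι)
  | iso {V W : Type} {G : Multigraph V} {H : Multigraph W} :
      Synth3 G → Iso G H → Synth3 H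

/-- The graphs obtainable from 3-thick trees by block-respecting cycle
expansions (cycle expansions whose new cycle lies inside a single block of the
resulting graph), up to isomorphism. -/
inductive BRSynth : ∀ {V : Type}, Multigraph V → Prop
  | base {V : Type} {G : Multigraph V} : IsThreeThickTree G → BRSynth G
  | expand {V : Type} {G : Multigraph V} (u : V) {d d' : ℕ} (h2 : 2 ≤ d') (hdd : d' ≤ d)
      (ι : Fin d ≃ {e : G.Edge // u ∈ G.ends e})
      (hblock : ∃ B : Set ({x : V // x ≠ u} ⊕ Fin d'),
        (G.cycleExpand u h2 hdd ι).IsBlock B ∧ ∀ j : Fin d', Sum.inr j ∈ B) :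
      BRSynth G → BRSynth (G.cycleExpand u h2 hdd ι)
  | iso {V W : Type} {G : Multigraph V} {H : Multigraph W} :
      BRSynth G → Iso G H → BRSynth H

end Multigraph
namespace Multigraph

open scoped Classical

variable {V : Type}

/-- Transport a walk along equalities of its endpoints. -/
def Walk.copy {G : Multigraph V} {a b a' b' : V} (w : G.Walk a b)
    (h1 : a = a') (h2 : b = b') : G.Walk a' b' := h1 ▸ h2 ▸ w

lemma Walk.copy_edges {G : Multigraph V} {a b a' b' : V} (w : G.Walk a b)
    (h1 : a = a') (h2 : b = b') : (w.copy h1 h2).edges = w.edges := by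
  subst h1; subst h2; rfl

lemma support_eq_cons {G : Multigraph V} {a b : V} (q : G.Walk a b) :
    q.support = a :: q.support.tail := by cases q <;> rfl

lemma start_mem_support {G : Multigraph V} {a b : V} (q : G.Walk a b) :
    a ∈ q.support := by rw [support_eq_cons]; exact List.mem_cons_self

/-- The vertex map used for contracting a set `S`. -/
noncomputable def cproj (S : Set V) (x : V) : Option {y : V // y ∉ S} :=
  if h : x ∈ S then none else some ⟨x, h⟩

lemma cproj_eq_none {S : Set V} {x : V} (hx : x ∈ S) : cproj S x = none :=
  dif_pos hx

lemma cproj_eq_some {S : Set V} (x : {y : V // y ∉ S}) : cproj S x.1 = some x :=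
  dif_neg x.2

lemma eq_of_cproj_eq_some {S : Set V} {x : V} {w : {y : V // y ∉ S}}
    (h : cproj S x = some w) : x = w.1 := by
  unfold cproj at h
  split at h
  · exact absurd h (by simp)
  · exact congrArg Subtype.val (Option.some_injective _ h)

lemma contractSet_ends {G : Multigraph V} {S : Set V} (e : (G.contractSet S).Edge) :
    (G.contractSet S).ends e = (G.ends e.1).map (cproj S) := rfl

/-- Projection of a walk of `G` to a walk of the contraction of `G`. -/
noncomputable def project {G : Multigraph V} (S : Set V) :
    ∀ {a b : V}, G.Walk a b → (G.contractSet S).Walk (cproj S a) (cproj S b)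
  | _, _, .nil a => .nil (cproj S a)
  | _, _, @Walk.cons _ _ a c b e he q =>
    if hk : ∀ x ∈ G.ends e, x ∈ S then
      (project S q).copy
        (by
          have ha : a ∈ G.ends e := by rw [he]; exact Sym2.mem_mk_left a c
          have hcc : c ∈ G.ends e := by rw [he]; exact Sym2.mem_mk_right a c
          exact (cproj_eq_none (hk c hcc)).trans (cproj_eq_none (hk a ha)).symm) rfl
    else
      .cons (⟨e, hk⟩ : (G.contractSet S).Edge)
        (by show (G.ends e).map (cproj S) = _; rw [he, Sym2.map_pair_eq]) (project S q)

lemma project_edges {G : Multigraph V} (S : Set V) :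
    ∀ {a b : V} (q : G.Walk a b),
      ((project S q).edges.map Subtype.val).Sublist q.edges
  | _, _, .nil a => by simp [project, Walk.edges]; rfl
  | _, _, @Walk.cons _ _ a c b e he q => by
    rw [project]
    split
    · rw [Walk.copy_edges]
      exact (project_edges S q).trans (List.sublist_cons_self e q.edges)
    · simp only [Walk.edges, List.map_cons]
      exact (project_edges S q).cons₂ e

lemma hasEDP_contract {G : Multigraph V} (S : Set V) {x y : V} {k : ℕ}
    (h : G.HasEDP x y k) : (G.contractSet S).HasEDP (cproj S x) (cproj S y) k := by
  obtain ⟨P, h1, h2⟩ := h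
  refine ⟨fun i => project S (P i), fun i => ?_, fun i j hij e he he' => ?_⟩
  · exact List.Nodup.of_map _ ((project_edges S (P i)).nodup (h1 i))
  · exact h2 i j hij e.1 ((project_edges S (P i)).subset (List.mem_map_of_mem (f := Subtype.val) he))
      ((project_edges S (P j)).subset (List.mem_map_of_mem (f := Subtype.val) he'))

lemma exists_edge_start {G : Multigraph V} {a b : V} (w : G.Walk a b) (hab : a ≠ b) :
    ∃ e ∈ w.edges, a ∈ G.ends e := by
  cases w with
  | nil => exact absurd rfl hab
  | cons e he q =>
    exact ⟨e, List.mem_cons_self, by rw [he]; exact Sym2.mem_mk_left _ _⟩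

lemma exists_edge_end {G : Multigraph V} :
    ∀ {a b : V} (w : G.Walk a b), a ≠ b → ∃ e ∈ w.edges, b ∈ G.ends e
  | _, _, .nil _, hab => absurd rfl hab
  | _, _, @Walk.cons _ _ a c b e he q, hab => by
    by_cases hcb : c = b
    · subst hcb
      exact ⟨e, List.mem_cons_self, by rw [he]; exact Sym2.mem_mk_right _ _⟩
    · obtain ⟨f, hf, hbf⟩ := exists_edge_end q hcb
      exact ⟨f, List.mem_cons_of_mem _ hf, hbf⟩

lemma le_ncard_incident {G : Multigraph V} {a : V} {k : ℕ} (f : Fin k → G.Edge)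
    (hinj : Function.Injective f) (hmem : ∀ i, a ∈ G.ends (f i)) :
    k ≤ {e : G.Edge | a ∈ G.ends e}.ncard := by
  have hf : Finite G.Edge := G.edge_finite
  have h : Nat.card (Fin k) ≤ Nat.card {e : G.Edge | a ∈ G.ends e} := by
    apply Nat.card_le_card_of_injective (fun i => (⟨f i, hmem i⟩ : {e : G.Edge | a ∈ G.ends e}))
    intro i j hij
    exact hinj (congrArg Subtype.val hij)
  simpa [Nat.card_coe_set_eq] using h

lemma hasEDP_le_ncard {G : Multigraph V} {a b c : V} (hab : a ≠ b) (hc : c = a ∨ c = b)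
    {k : ℕ} (h : G.HasEDP a b k) : k ≤ {e : G.Edge | c ∈ G.ends e}.ncard := by
  obtain ⟨P, _, h2⟩ := h
  rcases hc with rfl | rfl
  · choose f hf hcf using fun i => exists_edge_start (P i) hab
    refine le_ncard_incident f (fun i j hij => ?_) hcf
    by_contra hne
    exact h2 i j hne (f i) (hf i) (hij ▸ hf j)
  · choose f hf hcf using fun i => exists_edge_end (P i) hab
    refine le_ncard_incident f (fun i j hij => ?_) hcf
    by_contra hne
    exact h2 i j hne (f i) (hf i) (hij ▸ hf j)

lemma countP_incident {G : Multigraph V} (u : V) :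
    ∀ {a b : V} (q : G.Walk a b),
      (q.edges.countP fun e => decide (u ∈ G.ends e)) + (if u = b then 1 else 0)
        ≤ (if u = a then 1 else 0) + 2 * q.support.tail.count u
  | _, _, .nil a => by simp [Walk.edges, Walk.support]
  | _, _, @Walk.cons _ _ a c b e he q => by
    have ih := countP_incident u q
    have hmem : u ∈ G.ends e → u = a ∨ u = c := by
      rw [he]; exact fun h => Sym2.mem_iff.mp h
    have hsup : q.support.count u
        = (if u = c then 1 else 0) + q.support.tail.count u := by
      rw [support_eq_cons q, List.count_cons]
      by_cases h : u = c
      · simp [h, Nat.add_comm]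
      · have h' : ¬ c = u := fun hh => h hh.symm
        simp [h, h']
    have hkey : (if u ∈ G.ends e then 1 else 0)
        ≤ (if u = a then 1 else 0) + (if u = c then 1 else 0) := by
      by_cases hue : u ∈ G.ends e
      · rcases hmem hue with rfl | rfl <;> simp [hue]
      · simp [hue]
    simp only [Walk.edges, List.countP_cons, Walk.support, List.tail_cons, hsup,
      decide_eq_true_eq]
    linarith [ih, hkey]

lemma ncard_cycle_incident {G : Multigraph V} {v : V} (p : G.Walk v v) (hc : IsCycle p)
    (u : V) : {e : G.Edge | e ∈ p.edges ∧ u ∈ G.ends e}.ncard ≤ 2 := by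
  have hcount : p.support.tail.count u ≤ 1 := List.nodup_iff_count_le_one.mp hc.2.1 u
  have h := countP_incident u p
  have hle : (p.edges.countP fun e => decide (u ∈ G.ends e)) ≤ 2 := by
    by_cases huv : u = v
    · subst huv; simp at h; omega
    · simp [huv] at h; omega
  have hset : {e : G.Edge | e ∈ p.edges ∧ u ∈ G.ends e}
      = ↑(p.edges.filter fun e => decide (u ∈ G.ends e)).toFinset := by
    ext e; simp [List.mem_filter]
  rw [hset, Set.ncard_coe_finset]
  calc (p.edges.filter fun e => decide (u ∈ G.ends e)).toFinset.card
      ≤ (p.edges.filter fun e => decide (u ∈ G.ends e)).length :=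
        List.toFinset_card_le _
    _ = p.edges.countP fun e => decide (u ∈ G.ends e) :=
        List.countP_eq_length_filter.symm
    _ ≤ 2 := hle

lemma ncard_incident_contract {G : Multigraph V} (S : Set V) (x : {y : V // y ∉ S}) :
    {e' : (G.contractSet S).Edge | some x ∈ (G.contractSet S).ends e'}.ncard
      = {e : G.Edge | x.1 ∈ G.ends e}.ncard := by
  rw [← Nat.card_coe_set_eq, ← Nat.card_coe_set_eq]
  apply Nat.card_congr
  refine ⟨fun e' => ⟨e'.1.1, ?_⟩, fun e => ⟨⟨e.1, fun hall => x.2 (hall x.1 e.2)⟩, ?_⟩,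
    fun e' => ?_, fun e => ?_⟩
  · have h : some x ∈ (G.contractSet S).ends e'.1 := e'.2
    rw [contractSet_ends] at h
    obtain ⟨y, hy, hcy⟩ := Sym2.mem_map.mp h
    exact (eq_of_cproj_eq_some hcy) ▸ hy
  · show some x ∈ (G.ends e.1).map (cproj S)
    exact Sym2.mem_map.mpr ⟨x.1, e.2, cproj_eq_some x⟩
  · exact Subtype.ext (Subtype.ext rfl)
  · exact Subtype.ext rfl

end Multigraph

namespace Multigraph

/-- **Cycle contraction.**  Let `G` be a quasi 3-regular, exactly
3-edge-connected, 2-vertex-connected multigraph and let `C` be a chordless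
cycle of `G` containing the vertex of degree different from 3 (if one
exists).  Then the graph obtained from `G` by contracting `C` to a single
vertex is exactly 3-edge-connected and quasi 3-regular. -/
theorem contract_cycle_exactlyEdgeConnected {V : Type} (G : Multigraph V)
    (hq : G.QuasiRegular 3) (hG : G.ExactlyEdgeConnected 3) (hbi : G.Biconnected)
    {v : V} (p : G.Walk v v) (hc : IsCycle p) (hch : IsChordless p)
    (hhigh : ∀ x : V, G.degree x ≠ 3 → x ∈ p.support) :
    (G.contractSet {x | x ∈ p.support}).ExactlyEdgeConnected 3 ∧
      (G.contractSet {x | x ∈ p.support}).QuasiRegular 3 := by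
  classical
  set S : Set V := {x | x ∈ p.support} with hSdef
  have hvS : v ∈ S := start_mem_support p
  -- some vertex distinct from `v`
  obtain ⟨z1, z2, hz12⟩ := hG.1
  obtain ⟨z, hzv⟩ : ∃ z, z ≠ v := by
    rcases eq_or_ne z1 v with rfl | h
    · exact ⟨z2, fun h2 => hz12 h2.symm⟩
    · exact ⟨z1, h⟩
  -- the degree of `v` is at least 3
  have hdeg_v : 3 ≤ {e : G.Edge | v ∈ G.ends e}.ncard :=
    hasEDP_le_ncard (fun h => hzv h.symm) (Or.inl rfl) (hG.2 v z fun h => hzv h.symm).1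
  -- an edge at `v` not on the cycle, whose other end is outside `S`
  have hex : ∃ e : G.Edge, v ∈ G.ends e ∧ e ∉ p.edges := by
    by_contra hcon
    push_neg at hcon
    have hsub : {e : G.Edge | v ∈ G.ends e} ⊆ {e : G.Edge | e ∈ p.edges ∧ v ∈ G.ends e} :=
      fun e he => ⟨hcon e he, he⟩
    have h1 := Set.ncard_le_ncard hsub (Set.toFinite _)
    have h2 := ncard_cycle_incident p hc v
    omega
  obtain ⟨e0, hve0, he0p⟩ := hex
  have hends0 : G.ends e0 = s(v, Sym2.Mem.other hve0) := (Sym2.other_spec hve0).symm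
  have hwS : Sym2.Mem.other hve0 ∉ S := by
    intro hw
    exact hch e0 he0p v _ hends0 hvS hw
  have hnt : Nontrivial (Option {x : V // x ∉ S}) :=
    ⟨none, some ⟨Sym2.Mem.other hve0, hwS⟩, by simp⟩
  -- every vertex outside `S` has degree 3 in `G`
  have hdeg_out : ∀ x : {y : V // y ∉ S}, {e : G.Edge | x.1 ∈ G.ends e}.ncard = 3 := by
    intro x
    by_contra h
    exact x.2 (hhigh x.1 h)
  -- positive part: 3 edge-disjoint trails
  have hpos : ∀ a b : Option {x : V // x ∉ S}, a ≠ b →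
      (G.contractSet S).HasEDP a b 3 := by
    intro a b hab
    rcases a with _ | x <;> rcases b with _ | y
    · exact absurd rfl hab
    · have hvy : v ≠ y.1 := fun h => y.2 (h ▸ hvS)
      have h := hasEDP_contract S (hG.2 v y.1 hvy).1
      rwa [cproj_eq_none hvS, cproj_eq_some y] at h
    · have hxv : x.1 ≠ v := fun h => x.2 (by rw [h]; exact hvS)
      have h := hasEDP_contract S (hG.2 x.1 v hxv).1
      rwa [cproj_eq_none hvS, cproj_eq_some x] at h
    · have hxy : x.1 ≠ y.1 := fun h => hab (by rw [Option.some_inj]; exact Subtype.ext h)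
      have h := hasEDP_contract S (hG.2 x.1 y.1 hxy).1
      rwa [cproj_eq_some x, cproj_eq_some y] at h
  -- negative part: no 4 edge-disjoint trails
  have hneg : ∀ a b : Option {x : V // x ∉ S}, a ≠ b →
      ¬ (G.contractSet S).HasEDP a b 4 := by
    intro a b hab h
    have key : ∀ x : {y : V // y ∉ S}, (some x = a ∨ some x = b) → False := by
      intro x hx
      have h4 : 4 ≤ {e' : (G.contractSet S).Edge |
          some x ∈ (G.contractSet S).ends e'}.ncard :=
        hasEDP_le_ncard hab hx h
      rw [ncard_incident_contract, hdeg_out x] at h4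
      omega
    rcases a with _ | x
    · rcases b with _ | y
      · exact hab rfl
      · exact key y (Or.inr rfl)
    · exact key x (Or.inl rfl)
  have hd : ∀ x : {y : V // y ∉ S}, (G.contractSet S).degree (some x) = 3 := by
    intro x
    show {e' : (G.contractSet S).Edge | some x ∈ (G.contractSet S).ends e'}.ncard = 3
    rw [ncard_incident_contract]
    exact hdeg_out x
  refine ⟨⟨hnt, fun a b hab => ⟨hpos a b hab, hneg a b hab⟩⟩, ?_⟩
  intro w1 hw1 w2 hw2
  have hnone : ∀ t : Option {x : V // x ∉ S}, (G.contractSet S).degree t ≠ 3 → t = none := by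
    intro t ht
    rcases t with _ | x
    · rfl
    · exact absurd (hd x) ht
  rw [hnone w1 hw1, hnone w2 hw2]

end Multigraph
end

section
/- Let G be a 3-regular, 3-edge-connected multigraph, let (v, w) be an edge of G, and let u be a vertex of G distinct from v and w. Then G contains a chordless cycle that contains the edge (v, w) and does not contain the vertex u. -/
namespace Multigraph

open scoped Classical

variable {V : Type} {G : Multigraph V}

namespace Walk

lemma support_head : ∀ {a b : V} (p : G.Walk a b), p.support = a :: p.support.tail
  | _, _, .nil _ => rfl
  | _, _, .cons _ _ _ => rfl

lemma start_mem_support {a b : V} (p : G.Walk a b) : a ∈ p.support := by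
  rw [p.support_head]; exact List.mem_cons_self

lemma end_mem_support : ∀ {a b : V} (p : G.Walk a b), b ∈ p.support
  | _, _, .nil _ => List.mem_singleton_self _
  | _, _, .cons _ _ p => List.mem_cons_of_mem _ p.end_mem_support

lemma mem_support_of_mem_edges : ∀ {a b : V} (p : G.Walk a b) {f : G.Edge},
    f ∈ p.edges → ∀ x ∈ G.ends f, x ∈ p.support
  | _, _, .nil _, f, hf => by simp [edges] at hf
  | a, b, .cons g hg p, f, hf => by
      intro x hx
      rcases List.mem_cons.mp hf with rfl | hf
      · rw [hg, Sym2.mem_iff] at hx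
        rcases hx with rfl | rfl
        · exact List.mem_cons_self
        · exact List.mem_cons_of_mem _ p.start_mem_support
      · exact List.mem_cons_of_mem _ (p.mem_support_of_mem_edges hf x hx)

lemma edges_nodup_of_support_nodup : ∀ {a b : V} (p : G.Walk a b),
    p.support.Nodup → p.edges.Nodup
  | _, _, .nil _, _ => List.nodup_nil
  | a, b, .cons g hg p, h => by
      obtain ⟨ha, hnd⟩ := List.nodup_cons.mp h
      refine List.nodup_cons.mpr ⟨fun hgp => ha ?_, p.edges_nodup_of_support_nodup hnd⟩
      exact p.mem_support_of_mem_edges hgp a (by rw [hg]; simp)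

/-- Concatenation of walks. -/
def append : ∀ {a b c : V}, G.Walk a b → G.Walk b c → G.Walk a c
  | _, _, _, .nil _, q => q
  | _, _, _, .cons e he p, q => .cons e he (p.append q)

lemma edges_append : ∀ {a b c : V} (p : G.Walk a b) (q : G.Walk b c),
    (p.append q).edges = p.edges ++ q.edges
  | _, _, _, .nil _, q => rfl
  | _, _, _, .cons e he p, q => by
      show e :: (p.append q).edges = (e :: p.edges) ++ q.edges
      rw [p.edges_append q, List.cons_append]

lemma support_append : ∀ {a b c : V} (p : G.Walk a b) (q : G.Walk b c),
    (p.append q).support = p.support ++ q.support.tail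
  | _, _, _, .nil _, q => q.support_head
  | a, _, _, .cons e he p, q => by
      show a :: (p.append q).support = (a :: p.support) ++ q.support.tail
      rw [p.support_append q, List.cons_append]

lemma exists_first_edge {a b : V} (p : G.Walk a b) (hab : a ≠ b) :
    ∃ (c : V) (f : G.Edge) (hf : G.ends f = s(a, c)) (p' : G.Walk c b),
      p.edges = f :: p'.edges ∧ p.support = a :: p'.support := by
  cases p with
  | nil => exact absurd rfl hab
  | cons g hg p' => exact ⟨_, g, hg, p', rfl, rfl⟩

lemma one_le_length_edges {a b : V} (p : G.Walk a b) (hab : a ≠ b) :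
    1 ≤ p.edges.length := by
  obtain ⟨c, f, hf, p', hE, -⟩ := p.exists_first_edge hab
  rw [hE]; simp

lemma eq_of_edges_length_zero : ∀ {a b : V} (p : G.Walk a b),
    p.edges.length = 0 → a = b
  | _, _, .nil _, _ => rfl
  | _, _, .cons g hg p, h => by simp [edges] at h

lemma split {a b : V} (p : G.Walk a b) : ∀ x : V, x ∈ p.support →
    ∃ (q1 : G.Walk a x) (q2 : G.Walk x b),
      p.edges = q1.edges ++ q2.edges ∧ p.support = q1.support ++ q2.support.tail := by
  induction p with
  | nil a =>
      intro x hx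
      simp only [support, List.mem_singleton] at hx
      subst hx
      refine ⟨.nil _, .nil _, rfl, rfl⟩
  | @cons a c b g hg p ih =>
      intro x hx
      by_cases hxa : x = a
      · subst hxa
        exact ⟨.nil x, .cons g hg p, rfl, rfl⟩
      · have hx' : x ∈ p.support := by
          rcases List.mem_cons.mp hx with rfl | h
          · exact absurd rfl hxa
          · exact h
        obtain ⟨q1, q2, hE, hS⟩ := ih x hx'
        refine ⟨.cons g hg q1, q2, ?_, ?_⟩
        · show g :: p.edges = (g :: q1.edges) ++ q2.edges
          rw [hE, List.cons_append]
        · show a :: p.support = (a :: q1.support) ++ q2.support.tail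
          rw [hS, List.cons_append]

lemma doubleSplit {a b : V} (q : G.Walk a b) {x y : V} (hx : x ∈ q.support)
    (hy : y ∈ q.support) (hxy : x ≠ y) :
    ∃ (c d : V) (r1 : G.Walk a c) (r2 : G.Walk c d) (r3 : G.Walk d b),
      s(c, d) = s(x, y) ∧
      q.edges = r1.edges ++ r2.edges ++ r3.edges ∧
      q.support = r1.support ++ r2.support.tail ++ r3.support.tail := by
  obtain ⟨q1, q2, hE, hS⟩ := q.split x hx
  rw [hS] at hy
  rcases List.mem_append.mp hy with hy1 | hy2
  · obtain ⟨r1, r2, hE', hS'⟩ := q1.split y hy1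
    exact ⟨y, x, r1, r2, q2, Sym2.eq_swap, by rw [hE, hE'], by rw [hS, hS']⟩
  · have hy2' : y ∈ q2.support := List.mem_of_mem_tail hy2
    obtain ⟨r2, r3, hE', hS'⟩ := q2.split y hy2'
    refine ⟨x, y, q1, r2, r3, rfl, by rw [hE, hE', List.append_assoc], ?_⟩
    rw [hS, hS']
    obtain ⟨t, ht⟩ : ∃ t, r2.support = x :: t := ⟨_, r2.support_head⟩
    rw [ht]
    simp [List.append_assoc]

lemma exists_suffix_from {a b : V} (p : G.Walk a b) : ∀ x : V, x ∈ p.support →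
    ∃ q : G.Walk x b, q.support <:+ p.support ∧ q.edges ⊆ p.edges := by
  induction p with
  | nil a =>
      intro x hx
      simp only [support, List.mem_singleton] at hx
      subst hx
      exact ⟨.nil x, List.suffix_refl _, fun _ h => h⟩
  | @cons a c b g hg p ih =>
      intro x hx
      by_cases hx' : x ∈ p.support
      · obtain ⟨q, hsuf, hed⟩ := ih x hx'
        refine ⟨q, hsuf.trans ?_, fun f hf => List.mem_cons_of_mem _ (hed hf)⟩
        exact ⟨[a], rfl⟩
      · have hxa : x = a := by
          rcases List.mem_cons.mp hx with rfl | h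
          · rfl
          · exact absurd h hx'
        subst hxa
        exact ⟨.cons g hg p, List.suffix_refl _, fun _ h => h⟩

lemma exists_path {a b : V} (p : G.Walk a b) :
    ∃ q : G.Walk a b, q.support.Nodup ∧ q.support ⊆ p.support ∧ q.edges ⊆ p.edges := by
  induction p with
  | nil a => exact ⟨.nil a, by simp [support], fun _ h => h, fun _ h => h⟩
  | @cons a c b g hg p ih =>
      obtain ⟨q, hnd, hsup, hed⟩ := ih
      by_cases ha : a ∈ q.support
      · obtain ⟨q', hsuf, hed'⟩ := q.exists_suffix_from a ha
        refine ⟨q', hsuf.sublist.nodup hnd, ?_, ?_⟩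
        · exact fun x hx => List.mem_cons_of_mem _ (hsup (hsuf.subset hx))
        · exact fun f hf => List.mem_cons_of_mem _ (hed (hed' hf))
      · refine ⟨.cons g hg q, List.nodup_cons.mpr ⟨ha, hnd⟩, ?_, ?_⟩
        · intro x hx
          rcases List.mem_cons.mp hx with rfl | hx
          · exact List.mem_cons_self
          · exact List.mem_cons_of_mem _ (hsup hx)
        · intro f hf
          rcases List.mem_cons.mp hf with rfl | hf
          · exact List.mem_cons_self
          · exact List.mem_cons_of_mem _ (hed hf)

lemma two_edges_of_interior {a b : V} (p : G.Walk a b) :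
    p.edges.Nodup → ∀ {u : V}, u ∈ p.support → u ≠ a → u ≠ b →
    ∃ f g, f ∈ p.edges ∧ g ∈ p.edges ∧ f ≠ g ∧ u ∈ G.ends f ∧ u ∈ G.ends g := by
  induction p with
  | nil c =>
      intro _ u hu hua _
      simp only [support, List.mem_singleton] at hu
      exact absurd hu hua
  | @cons a c b g hg p ih =>
      intro hnd u hu hua hub
      have hu' : u ∈ p.support := by
        rcases List.mem_cons.mp hu with rfl | h
        · exact absurd rfl hua
        · exact h
      obtain ⟨hgp, hnd'⟩ := List.nodup_cons.mp hnd
      by_cases huc : u = c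
      · subst huc
        obtain ⟨d, f', hf', p'', hE, -⟩ := p.exists_first_edge hub
        refine ⟨g, f', List.mem_cons_self, ?_, ?_, ?_, ?_⟩
        · exact List.mem_cons_of_mem _ (by rw [hE]; exact List.mem_cons_self)
        · rintro rfl
          exact hgp (by rw [hE]; exact List.mem_cons_self)
        · rw [hg]; simp
        · rw [hf']; simp
      · obtain ⟨f', g', h1, h2, h3, h4, h5⟩ := ih hnd' hu' huc hub
        exact ⟨f', g', List.mem_cons_of_mem _ h1, List.mem_cons_of_mem _ h2, h3, h4, h5⟩

end Walk

lemma four_distinct_incident_absurd {x : V} (hdeg : G.degree x = 3)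
    {e1 e2 e3 e4 : G.Edge} (h1 : x ∈ G.ends e1) (h2 : x ∈ G.ends e2)
    (h3 : x ∈ G.ends e3) (h4 : x ∈ G.ends e4)
    (d12 : e1 ≠ e2) (d13 : e1 ≠ e3) (d14 : e1 ≠ e4) (d23 : e2 ≠ e3)
    (d24 : e2 ≠ e4) (d34 : e3 ≠ e4) : False := by
  have hsub : ({e1, e2, e3, e4} : Set G.Edge) ⊆ {e | x ∈ G.ends e} := by
    intro f hf
    simp only [Set.mem_insert_iff, Set.mem_singleton_iff] at hf
    rcases hf with rfl | rfl | rfl | rfl <;> assumption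
  have hcard : ({e1, e2, e3, e4} : Set G.Edge).ncard = 4 := by
    rw [Set.ncard_insert_of_notMem (by simp [d12, d13, d14]) (Set.toFinite _),
        Set.ncard_insert_of_notMem (by simp [d23, d24]) (Set.toFinite _),
        Set.ncard_insert_of_notMem (by simp [d34]) (Set.toFinite _),
        Set.ncard_singleton]
  have hle := Set.ncard_le_ncard hsub (Set.toFinite _)
  rw [hcard] at hle
  rw [degree] at hdeg
  omega

/-- A 3-regular graph with 3 edge-disjoint trails from `a` to `z` has no
parallel pair of edges between `a` and `b` whenever `z ∉ {a, b}`. -/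
lemma no_parallel (hreg : ∀ x : V, G.degree x = 3) {a b z : V}
    (hEDP : G.HasEDP a z 3) (hza : z ≠ a) (hzb : z ≠ b)
    {f g : G.Edge} (hfg : f ≠ g) (hf : G.ends f = s(a, b)) (hg : G.ends g = s(a, b)) :
    False := by
  obtain ⟨P, hnd, hdisj⟩ := hEDP
  have haz : a ≠ z := fun h => hza h.symm
  have hab : a ≠ b := by
    intro h
    exact G.loopless f (by rw [hf]; exact Sym2.mk_isDiag_iff.mpr h)
  have hdec : ∀ i : Fin 3, ∃ (c : V) (f₀ : G.Edge), G.ends f₀ = s(a, c) ∧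
      ∃ p : G.Walk c z, (P i).edges = f₀ :: p.edges := by
    intro i
    obtain ⟨c, f₀, hf₀, p, hE, -⟩ := (P i).exists_first_edge haz
    exact ⟨c, f₀, hf₀, p, hE⟩
  choose c F hF p hE using hdec
  have hFmem : ∀ i, F i ∈ (P i).edges := fun i => by
    rw [hE i]; exact List.mem_cons_self
  have hFinj : ∀ i j : Fin 3, i ≠ j → F i ≠ F j := fun i j hij hFij =>
    hdisj i j hij (F i) (hFmem i) (hFij ▸ hFmem j)
  have hFa : ∀ i, a ∈ G.ends (F i) := fun i => by rw [hF i]; simp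
  have hfa : a ∈ G.ends f := by rw [hf]; simp
  have hga : a ∈ G.ends g := by rw [hg]; simp
  have hfi : ∃ i, F i = f := by
    by_contra hc
    push_neg at hc
    exact four_distinct_incident_absurd (hreg a) (hFa 0) (hFa 1) (hFa 2) hfa
      (hFinj 0 1 (by decide)) (hFinj 0 2 (by decide)) (hc 0)
      (hFinj 1 2 (by decide)) (hc 1) (hc 2)
  have hgi : ∃ i, F i = g := by
    by_contra hc
    push_neg at hc
    exact four_distinct_incident_absurd (hreg a) (hFa 0) (hFa 1) (hFa 2) hga
      (hFinj 0 1 (by decide)) (hFinj 0 2 (by decide)) (hc 0)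
      (hFinj 1 2 (by decide)) (hc 1) (hc 2)
  obtain ⟨i, hi⟩ := hfi
  obtain ⟨j, hj⟩ := hgi
  have hij : i ≠ j := fun h => hfg (hi ▸ hj ▸ h ▸ rfl)
  have hci : c i = b := by
    have : s(a, c i) = s(a, b) := by rw [← hF i, hi, hf]
    rcases Sym2.eq_iff.mp this with ⟨-, h⟩ | ⟨h1, h2⟩
    · exact h
    · exact absurd h1 hab
  have hcj : c j = b := by
    have : s(a, c j) = s(a, b) := by rw [← hF j, hj, hg]
    rcases Sym2.eq_iff.mp this with ⟨-, h⟩ | ⟨h1, h2⟩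
    · exact h
    · exact absurd h1 hab
  have hciz : c i ≠ z := by rw [hci]; exact fun h => hzb h.symm
  have hcjz : c j ≠ z := by rw [hcj]; exact fun h => hzb h.symm
  obtain ⟨d1, h1, hh1, p1, hE1, -⟩ := (p i).exists_first_edge hciz
  obtain ⟨d2, h2, hh2, p2, hE2, -⟩ := (p j).exists_first_edge hcjz
  have h1mem : h1 ∈ (p i).edges := by rw [hE1]; exact List.mem_cons_self
  have h2mem : h2 ∈ (p j).edges := by rw [hE2]; exact List.mem_cons_self
  have h1memP : h1 ∈ (P i).edges := by rw [hE i]; exact List.mem_cons_of_mem _ h1mem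
  have h2memP : h2 ∈ (P j).edges := by rw [hE j]; exact List.mem_cons_of_mem _ h2mem
  have hfb : b ∈ G.ends f := by rw [hf]; simp
  have hgb : b ∈ G.ends g := by rw [hg]; simp
  have hh1b : b ∈ G.ends h1 := by rw [hh1, ← hci]; simp
  have hh2b : b ∈ G.ends h2 := by rw [hh2, ← hcj]; simp
  refine four_distinct_incident_absurd (hreg b) hfb hgb hh1b hh2b hfg ?_ ?_ ?_ ?_ ?_
  · -- f ≠ h1 : nodup of trail i
    rintro rfl
    have := hnd i
    rw [hE i] at this
    exact (List.nodup_cons.mp this).1 (by rw [hi]; exact h1mem)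
  · -- f ≠ h2 : disjointness i j
    rintro rfl
    exact hdisj i j hij f (hi ▸ hFmem i) h2memP
  · -- g ≠ h1 : disjointness j i
    rintro rfl
    exact hdisj j i hij.symm g (hj ▸ hFmem j) h1memP
  · -- g ≠ h2 : nodup of trail j
    rintro rfl
    have := hnd j
    rw [hE j] at this
    exact (List.nodup_cons.mp this).1 (by rw [hj]; exact h2mem)
  · -- h1 ≠ h2 : disjointness
    rintro rfl
    exact hdisj i j hij h1 h1memP h2memP

/-- **Chordless cycles through an edge avoiding a vertex (3-regular case).**
Let `G` be a 3-regular, 3-edge-connected multigraph, let `e = (v, w)` be an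
edge and let `u` be a vertex distinct from `v` and `w`.  Then `G` contains a
chordless cycle through the edge `e` avoiding the vertex `u`. -/
theorem exists_chordless_cycle_regular {V : Type} (G : Multigraph V)
    (h3 : G.EdgeConnected 3) (hreg : ∀ x : V, G.degree x = 3)
    {v w : V} (e : G.Edge) (he : G.ends e = s(v, w))
    (u : V) (huv : u ≠ v) (huw : u ≠ w) :
    ∃ (x : V) (p : G.Walk x x), IsCycle p ∧ IsChordless p ∧
      e ∈ p.edges ∧ u ∉ p.support := by
  classical
  have hvw : v ≠ w := by
    intro h
    exact G.loopless e (by rw [he]; exact Sym2.mk_isDiag_iff.mpr h)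
  obtain ⟨hNT, hEDP⟩ := h3
  obtain ⟨P, hnd, hdisj⟩ := hEDP w v (Ne.symm hvw)
  have hvisit : ∀ i j : Fin 3, i ≠ j → u ∈ (P i).support → u ∈ (P j).support → False := by
    intro i j hij hi hj
    obtain ⟨f1, g1, hf1, hg1, hfg1, hf1u, hg1u⟩ :=
      (P i).two_edges_of_interior (hnd i) hi huw huv
    obtain ⟨f2, g2, hf2, hg2, hfg2, hf2u, hg2u⟩ :=
      (P j).two_edges_of_interior (hnd j) hj huw huv
    exact four_distinct_incident_absurd (hreg u) hf1u hg1u hf2u hg2u hfg1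
      (fun h => hdisj i j hij f1 hf1 (by rw [h]; exact hf2))
      (fun h => hdisj i j hij f1 hf1 (by rw [h]; exact hg2))
      (fun h => hdisj i j hij g1 hg1 (by rw [h]; exact hf2))
      (fun h => hdisj i j hij g1 hg1 (by rw [h]; exact hg2))
      hfg2
  have hex : ∃ i, e ∉ (P i).edges ∧ u ∉ (P i).support := by
    by_contra hc
    push_neg at hc
    have key : ∀ i, e ∈ (P i).edges ∨ u ∈ (P i).support := by
      intro i
      by_cases h1 : e ∈ (P i).edges
      · exact Or.inl h1
      · exact Or.inr (hc i h1)
    rcases key 0 with h0 | h0 <;> rcases key 1 with h1 | h1 <;> rcases key 2 with h2 | h2 <;>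
      first
        | exact hdisj 0 1 (by decide) e h0 h1
        | exact hdisj 0 2 (by decide) e h0 h2
        | exact hdisj 1 2 (by decide) e h1 h2
        | exact hvisit 0 1 (by decide) h0 h1
        | exact hvisit 0 2 (by decide) h0 h2
        | exact hvisit 1 2 (by decide) h1 h2
  obtain ⟨i, hie, hiu⟩ := hex
  obtain ⟨q0, hq0nd, hq0sup, hq0ed⟩ := (P i).exists_path
  have hSne : ∃ n, ∃ q : G.Walk w v, q.edges.length = n ∧ q.support.Nodup ∧
      u ∉ q.support ∧ e ∉ q.edges :=
    ⟨_, q0, rfl, hq0nd, fun h => hiu (hq0sup h), fun h => hie (hq0ed h)⟩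
  obtain ⟨q, hqlen, hqnd, hqu, hqe⟩ := Nat.find_spec hSne
  have hmin : ∀ q' : G.Walk w v, q'.support.Nodup → u ∉ q'.support → e ∉ q'.edges →
      ¬ q'.edges.length < q.edges.length := by
    intro q' h1 h2 h3 hlt
    rw [hqlen] at hlt
    exact Nat.find_min hSne hlt ⟨q', rfl, h1, h2, h3⟩
  refine ⟨v, Walk.cons e he q, ⟨?_, ?_, ?_⟩, ?_, List.mem_cons_self, ?_⟩
  · exact List.nodup_cons.mpr ⟨hqe, q.edges_nodup_of_support_nodup hqnd⟩
  · exact hqnd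
  · show 2 ≤ (e :: q.edges).length
    have := q.one_le_length_edges (Ne.symm hvw)
    simp only [List.length_cons]
    omega
  · -- chordless
    intro f hf x y hfxy hx hy
    have hfe : f ≠ e := fun h => hf (by rw [h]; exact List.mem_cons_self)
    have hfq : f ∉ q.edges := fun h => hf (List.mem_cons_of_mem _ h)
    have hxy : x ≠ y := by
      intro h
      exact G.loopless f (by rw [hfxy]; exact Sym2.mk_isDiag_iff.mpr h)
    have hxq : x ∈ q.support := by
      rcases List.mem_cons.mp hx with rfl | h
      · exact q.end_mem_support
      · exact h
    have hyq : y ∈ q.support := by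
      rcases List.mem_cons.mp hy with rfl | h
      · exact q.end_mem_support
      · exact h
    obtain ⟨c, d, r1, r2, r3, hcd, hE2, hS2⟩ := q.doubleSplit hxq hyq hxy
    have hfcd : G.ends f = s(c, d) := by rw [hfxy, ← hcd]
    have hcdne : c ≠ d := by
      intro h
      apply hxy
      have hdg : s(x, y).IsDiag := by rw [← hcd]; exact Sym2.mk_isDiag_iff.mpr h
      exact Sym2.mk_isDiag_iff.mp hdg
    obtain ⟨d2, g, hg, r2', hE3, hS3⟩ := r2.exists_first_edge hcdne
    by_cases hone : r2.edges.length = 1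
    · -- the chord is parallel to an edge of the cycle: contradiction
      have hd2 : d2 = d := by
        apply r2'.eq_of_edges_length_zero
        rw [hE3] at hone
        simpa using hone
      rw [hd2] at hg
      have hgq : g ∈ q.edges := by
        rw [hE2]
        exact List.mem_append_left _
          (List.mem_append_right _ (by rw [hE3]; exact List.mem_cons_self))
      have hgf : g ≠ f := fun h => hfq (h ▸ hgq)
      have hxu : x ≠ u := fun h => hqu (h ▸ hxq)
      have hyu : u ≠ y := fun h => hqu (h.symm ▸ hyq)
      exact no_parallel hreg (hEDP x u hxu) (Ne.symm hxu) hyu hgf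
        (by rw [hg, hcd]) hfxy
    · -- shortcut along the chord: contradiction with minimality
      have h1le : 1 ≤ r2.edges.length := by rw [hE3]; simp
      have h2le : 2 ≤ r2.edges.length := by omega
      set q' := r1.append (Walk.cons f hfcd r3) with hq'def
      have hq'E : q'.edges = r1.edges ++ f :: r3.edges := by
        rw [hq'def, Walk.edges_append]
        rfl
      have hq'S : q'.support = r1.support ++ d :: r3.support.tail := by
        rw [hq'def, Walk.support_append]
        congr 1
        exact r3.support_head
      have hqnd' : (r1.support ++ (r2.support.tail ++ r3.support.tail)).Nodup := by
        rw [← List.append_assoc, ← hS2]; exact hqnd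
      rw [List.nodup_append] at hqnd'
      obtain ⟨hnd1, hnd23, hdisj1⟩ := hqnd'
      rw [List.nodup_append] at hnd23
      obtain ⟨hnd2, hnd3, hdisj23⟩ := hnd23
      have hdmem : d ∈ r2.support.tail := by
        rw [hS3]
        simpa using r2'.end_mem_support
      have hq'nd : q'.support.Nodup := by
        rw [hq'S, List.nodup_append]
        refine ⟨hnd1, List.nodup_cons.mpr ⟨fun h => hdisj23 d hdmem d h rfl, hnd3⟩, ?_⟩
        intro t ht t' htc htt
        subst htt
        rcases List.mem_cons.mp htc with rfl | htc
        · exact hdisj1 _ ht _ (List.mem_append_left _ hdmem) rfl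
        · exact hdisj1 _ ht _ (List.mem_append_right _ htc) rfl
      have hq'u : u ∉ q'.support := by
        rw [hq'S]
        intro hu'
        apply hqu
        rw [hS2]
        rcases List.mem_append.mp hu' with h | h
        · exact List.mem_append_left _ (List.mem_append_left _ h)
        · rcases List.mem_cons.mp h with rfl | h
          · exact List.mem_append_left _ (List.mem_append_right _ hdmem)
          · exact List.mem_append_right _ h
      have hq'e : e ∉ q'.edges := by
        rw [hq'E]
        intro hu'
        rcases List.mem_append.mp hu' with h | h
        · refine hqe ?_
          rw [hE2]
          exact List.mem_append_left _ (List.mem_append_left _ h)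
        · rcases List.mem_cons.mp h with rfl | h
          · exact hfe rfl
          · exact hqe (by rw [hE2]; exact List.mem_append_right _ h)
      refine hmin q' hq'nd hq'u hq'e ?_
      rw [hq'E, hE2]
      simp only [List.length_append, List.length_cons]
      omega
  · -- u not in the support of the cycle
    intro hu
    rcases List.mem_cons.mp hu with h | h
    · exact huv h
    · exact hqu h

end Multigraph
end
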